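/- Let k ≥ 1, let γ_1 < γ_2 < … < γ_{k+1} be real labels, and let ρ : ℝ → ℝ. The convex biconjugate of the lifted dataterm ρ_lift := min_{1≤i≤k} ρ_i satisfies, for every u ∈ ℝ^k, ρ_lift^{**}(u) = sup_{v ∈ ℝ^k} ( ⟨u, v⟩ − max_{1 ≤ i ≤ k} ρ_i^*(v) ), where ρ_i^*(v) = ⟨1_{i−1}, v⟩ − (γ_i/(γ_{i+1} − γ_i))·v_i + (ρ + δ_{[γ_i, γ_{i+1}]})^*( v_i/(γ_{i+1} − γ_i) ). -/

import Mathlib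

/-- Dot product (inner product) on ℝ^k. -/
noncomputable def dotk {k : ℕ} (v u : Fin k → ℝ) : ℝ := ∑ j, v j * u j

/-- Convex conjugate of an extended-real-valued function on ℝ^k:
`f^*(v) = sup_u ⟨v,u⟩ - f(u)`. -/
noncomputable def conjV {k : ℕ} (f : (Fin k → ℝ) → EReal) (v : Fin k → ℝ) : EReal :=
  ⨆ u : Fin k → ℝ, (dotk v u : EReal) - f u

/-- The vector `1_i` : first `i` entries 1, remaining entries 0 (so `onevec k 0 = 0`). -/
noncomputable def onevec (k : ℕ) (i : ℕ) : Fin k → ℝ := fun j => if (j : ℕ) < i then 1 else 0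

/-- `1_i^α` (with 0-based interval index `i`): first `i` entries 1, entry `i` equals `α`,
remaining entries 0.  This is `α • 1_{i+1} + (1-α) • 1_i` in the 0-based numbering of `onevec`. -/
noncomputable def liftvec {k : ℕ} (i : Fin k) (α : ℝ) : Fin k → ℝ :=
  fun j => if (j : ℕ) < (i : ℕ) then 1 else if j = i then α else 0

/-- `γ_i^α = γ_i + α (γ_{i+1} - γ_i)`, with 0-based interval index `i`. -/
noncomputable def gammaAff {k : ℕ} (γ : Fin (k+1) → ℝ) (i : Fin k) (α : ℝ) : ℝ :=
  γ i.castSucc + α * (γ i.succ - γ i.castSucc)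

/-- The lifted piece `ρ_i` : equals `ρ(γ_i^α)` if `u = 1_i^α` for some `α ∈ [0,1]`,
and `+∞` otherwise (the set below is a singleton or empty, and `sInf ∅ = ⊤` in `EReal`). -/
noncomputable def rhoPiece {k : ℕ} (γ : Fin (k+1) → ℝ) (ρ : ℝ → ℝ) (i : Fin k)
    (u : Fin k → ℝ) : EReal :=
  sInf {c : EReal | ∃ α ∈ Set.Icc (0:ℝ) 1, u = liftvec i α ∧ c = (ρ (gammaAff γ i α) : EReal)}

/-- Scalar convex conjugate: `f^*(v) = sup_u (v·u - f(u))`. -/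
noncomputable def conj1 (f : ℝ → EReal) (v : ℝ) : EReal :=
  ⨆ u : ℝ, ((v * u : ℝ) : EReal) - f u

/-- `ρ + δ_{[a,b]}` : equals `ρ` on `[a,b]` and `+∞` elsewhere. -/
noncomputable def rhoRestr (ρ : ℝ → ℝ) (a b : ℝ) : ℝ → EReal :=
  fun t => if t ∈ Set.Icc a b then (ρ t : EReal) else ⊤

section Aux

lemma my_neg_iInf {ι : Sort*} (f : ι → EReal) : -(⨅ i, f i) = ⨆ i, -f i := by
  refine le_antisymm ?_ (iSup_le fun i => EReal.neg_le_neg_iff.2 (iInf_le f i))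
  rw [EReal.neg_le]
  exact le_iInf fun i => EReal.neg_le.1 (le_iSup (fun i => -f i) i)

/-- Adding a real constant on the right, as an order isomorphism of `EReal`. -/
noncomputable def addRealIso (d : ℝ) : EReal ≃o EReal where
  toFun x := x + (d : EReal)
  invFun x := x - (d : EReal)
  left_inv x := EReal.add_sub_cancel_right
  right_inv x := EReal.sub_add_cancel
  map_rel_iff' := (EReal.addLECancellable_coe d).add_le_add_iff_right

lemma my_add_iSup {ι : Sort*} (d : ℝ) (f : ι → EReal) :
    (⨆ i, f i) + (d : EReal) = ⨆ i, (f i + (d : EReal)) :=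
  (addRealIso d).map_iSup f

lemma my_const_add_iSup {ι : Sort*} (d : ℝ) (f : ι → EReal) :
    (d : EReal) + ⨆ i, f i = ⨆ i, ((d : EReal) + f i) := by
  rw [add_comm, my_add_iSup]; simp_rw [add_comm]

lemma my_sub_iInf {ι : Sort*} (d : ℝ) (f : ι → EReal) :
    (d : EReal) - ⨅ i, f i = ⨆ i, ((d : EReal) - f i) := by
  rw [sub_eq_add_neg, my_neg_iInf, my_const_add_iSup]
  simp_rw [sub_eq_add_neg]

lemma conjV_iInf {k : ℕ} {ι : Sort*} (g : ι → (Fin k → ℝ) → EReal) (v : Fin k → ℝ) :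
    conjV (fun w => ⨅ i, g i w) v = ⨆ i, conjV (g i) v := by
  unfold conjV
  simp_rw [my_sub_iInf]
  exact iSup_comm

lemma liftvec_inj {k : ℕ} (i : Fin k) {α β : ℝ} (h : liftvec i α = liftvec i β) : α = β := by
  have := congrFun h i
  simpa [liftvec] using this

lemma rhoPiece_liftvec {k : ℕ} (γ : Fin (k+1) → ℝ) (ρ : ℝ → ℝ) (i : Fin k) (α : ℝ) :
    rhoPiece γ ρ i (liftvec i α) =
      if α ∈ Set.Icc (0:ℝ) 1 then (ρ (gammaAff γ i α) : EReal) else ⊤ := by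
  unfold rhoPiece
  split_ifs with h
  · have hset : {c : EReal | ∃ β ∈ Set.Icc (0:ℝ) 1, liftvec i α = liftvec i β ∧
        c = (ρ (gammaAff γ i β) : EReal)} = {(ρ (gammaAff γ i α) : EReal)} := by
      ext c
      constructor
      · rintro ⟨β, hβ, he, rfl⟩
        rw [liftvec_inj i he]
        rfl
      · rintro rfl
        exact ⟨α, h, rfl, rfl⟩
    rw [hset, sInf_singleton]
  · have hset : {c : EReal | ∃ β ∈ Set.Icc (0:ℝ) 1, liftvec i α = liftvec i β ∧
        c = (ρ (gammaAff γ i β) : EReal)} = ∅ := by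
      ext c
      simp only [Set.mem_empty_iff_false, iff_false, Set.mem_setOf_eq, not_exists]
      rintro β ⟨hβ, he, rfl⟩
      exact h (liftvec_inj i he ▸ hβ)
    rw [hset, sInf_empty]

lemma rhoPiece_not_lift {k : ℕ} (γ : Fin (k+1) → ℝ) (ρ : ℝ → ℝ) (i : Fin k) {u : Fin k → ℝ}
    (h : ∀ α : ℝ, u ≠ liftvec i α) : rhoPiece γ ρ i u = ⊤ := by
  unfold rhoPiece
  rw [sInf_eq_top]
  rintro c ⟨β, hβ, he, rfl⟩
  exact absurd he (h β)

lemma dot_liftvec {k : ℕ} (i : Fin k) (α : ℝ) (v : Fin k → ℝ) :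
    dotk v (liftvec i α) = dotk (onevec k (i : ℕ)) v + α * v i := by
  unfold dotk liftvec onevec
  have key : ∀ j : Fin k, v j * (if (j:ℕ) < (i:ℕ) then 1 else if j = i then α else 0)
      = (if (j:ℕ) < (i:ℕ) then (1:ℝ) else 0) * v j + (if j = i then α * v i else 0) := by
    intro j
    rcases lt_trichotomy (j:ℕ) (i:ℕ) with h|h|h
    · have hne : j ≠ i := Fin.ne_of_val_ne h.ne
      simp [h, hne]
    · have heq : j = i := Fin.ext h
      subst heq
      simp [mul_comm]
    · have hne : j ≠ i := Fin.ne_of_val_ne h.ne'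
      simp [not_lt.2 h.le, hne]
  simp_rw [key]
  rw [Finset.sum_add_distrib, Finset.sum_ite_eq' Finset.univ i (fun _ => α * v i)]
  simp

/-- The affine reparametrisation `α ↦ a + α (b - a)` as an equivalence of `ℝ`. -/
noncomputable def affEquiv (a b : ℝ) (h : b - a ≠ 0) : ℝ ≃ ℝ :=
  ⟨fun α => a + α * (b - a), fun t => (t - a) / (b - a),
    fun α => by field_simp; ring, fun t => by field_simp; ring⟩

lemma conj_piece {k : ℕ} (γ : Fin (k+1) → ℝ) (hγ : StrictMono γ) (ρ : ℝ → ℝ) (i : Fin k)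
    (v : Fin k → ℝ) :
    conjV (rhoPiece γ ρ i) v
      = (((dotk (onevec k (i : ℕ)) v
            - (γ i.castSucc / (γ i.succ - γ i.castSucc)) * v i : ℝ) : EReal)
          + conj1 (rhoRestr ρ (γ i.castSucc) (γ i.succ))
              (v i / (γ i.succ - γ i.castSucc))) := by
  set a := γ i.castSucc with ha
  set b := γ i.succ with hb
  have hab : a < b := hγ (Fin.castSucc_lt_succ (i := i))
  have hΔ : (0:ℝ) < b - a := by linarith
  set s : ℝ := v i / (b - a) with hs
  set c : ℝ := dotk (onevec k (i : ℕ)) v - (a / (b - a)) * v i with hc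
  -- Step 1 : restrict the sup to the range of `liftvec i`
  have step1 : conjV (rhoPiece γ ρ i) v
      = ⨆ α : ℝ, ((dotk v (liftvec i α) : EReal) - rhoPiece γ ρ i (liftvec i α)) := by
    refine le_antisymm (iSup_le fun u => ?_) (iSup_le fun α => le_iSup
      (fun w => (dotk v w : EReal) - rhoPiece γ ρ i w) (liftvec i α))
    by_cases h : ∃ α : ℝ, u = liftvec i α
    · obtain ⟨α, rfl⟩ := h
      exact le_iSup (fun α => (dotk v (liftvec i α) : EReal) - rhoPiece γ ρ i (liftvec i α)) α
    · push_neg at h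
      rw [rhoPiece_not_lift γ ρ i h, EReal.sub_top]
      exact bot_le
  -- Step 2 : reparametrise the scalar conjugate
  let e : ℝ ≃ ℝ := affEquiv a b hΔ.ne'
  have he : ∀ α : ℝ, e α = gammaAff γ i α := by
    intro α; simp only [e, affEquiv, Equiv.coe_fn_mk, gammaAff, ← ha, ← hb]
  have step2 : conj1 (rhoRestr ρ a b) s
      = ⨆ α : ℝ, (((s * gammaAff γ i α : ℝ) : EReal) - rhoRestr ρ a b (gammaAff γ i α)) := by
    unfold conj1
    rw [← e.iSup_comp (g := fun t => ((s * t : ℝ) : EReal) - rhoRestr ρ a b t)]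
    simp_rw [he]
  -- Step 3 : pointwise identity
  have step3 : ∀ α : ℝ, ((dotk v (liftvec i α) : EReal) - rhoPiece γ ρ i (liftvec i α))
      = (c : EReal) + (((s * gammaAff γ i α : ℝ) : EReal) - rhoRestr ρ a b (gammaAff γ i α)) := by
    intro α
    by_cases hα : α ∈ Set.Icc (0:ℝ) 1
    · obtain ⟨h0, h1⟩ := hα
      have ht : gammaAff γ i α ∈ Set.Icc a b := by
        constructor
        · simp only [gammaAff, ← ha, ← hb]; nlinarith
        · simp only [gammaAff, ← ha, ← hb]; nlinarith
      rw [rhoPiece_liftvec, if_pos ⟨h0, h1⟩, rhoRestr, if_pos ht]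
      rw [← EReal.coe_sub, ← EReal.coe_sub, ← EReal.coe_add, EReal.coe_eq_coe_iff]
      rw [dot_liftvec]
      simp only [gammaAff, ← ha, ← hb, hc, hs]
      field_simp
      ring
    · have ht : gammaAff γ i α ∉ Set.Icc a b := by
        rcases (by
          by_contra hcon
          push_neg at hcon
          exact hα ⟨hcon.1, hcon.2⟩ : α < 0 ∨ 1 < α) with h0 | h1
        · intro ⟨hh, _⟩
          simp only [gammaAff, ← ha, ← hb] at hh
          nlinarith
        · intro ⟨_, hh⟩
          simp only [gammaAff, ← ha, ← hb] at hh
          nlinarith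
      rw [rhoPiece_liftvec, if_neg hα, EReal.sub_top, rhoRestr, if_neg ht, EReal.sub_top,
        EReal.add_bot]
  rw [step1, step2, my_const_add_iSup]
  exact iSup_congr step3

end Aux

/-- Proposition 1. The biconjugate of the lifted dataterm
`ρ_lift = min_i ρ_i` satisfies
`ρ_lift^{**}(u) = sup_v ( ⟨u,v⟩ - max_i ρ_i^*(v) )`, where `ρ_i^*(v)` is given by the
explicit formula
`⟨1_{i-1}, v⟩ - (γ_i/(γ_{i+1}-γ_i))·v_i + (ρ + δ_{[γ_i,γ_{i+1}]})^*(v_i/(γ_{i+1}-γ_i))`. -/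
theorem biconj_rhoLift_eq {k : ℕ} (hk : 1 ≤ k) (γ : Fin (k+1) → ℝ) (hγ : StrictMono γ)
    (ρ : ℝ → ℝ) (u : Fin k → ℝ) :
    conjV (conjV (fun w => ⨅ i : Fin k, rhoPiece γ ρ i w)) u
      = ⨆ v : Fin k → ℝ, (dotk u v : EReal)
          - ⨆ i : Fin k,
              (((dotk (onevec k (i : ℕ)) v
                  - (γ i.castSucc / (γ i.succ - γ i.castSucc)) * v i : ℝ) : EReal)
                + conj1 (rhoRestr ρ (γ i.castSucc) (γ i.succ))
                    (v i / (γ i.succ - γ i.castSucc))) := by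
  show (⨆ v : Fin k → ℝ, (dotk u v : EReal)
      - conjV (fun w => ⨅ i : Fin k, rhoPiece γ ρ i w) v) = _
  refine iSup_congr fun v => ?_
  congr 1
  rw [conjV_iInf]
  exact iSup_congr fun i => conj_piece γ hγ ρ i v
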